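/- Let A be a nontrivial finite-dimensional associative unital ℂ-algebra. Then A is a simple ring (its only two-sided ideals are {0} and A) if and only if there exists n ≥ 1 and a ℂ-algebra isomorphism A ≅ Mat_n(ℂ). -/

import Mathlib

section Aux

variable (A : Type*) [Ring A] [Algebra ℂ A]

private theorem aux_smulComm (S : Type*) [AddCommGroup S] [Module A S] [Module ℂ S]
    [IsScalarTower ℂ A S] : SMulCommClass ℂ A S := by
  constructor
  intro c a x
  rw [← smul_assoc, Algebra.smul_def c a, Algebra.commutes, mul_smul, algebraMap_smul]

variable (S : Type*) [AddCommGroup S] [Module A S] [Module ℂ S] [IsScalarTower ℂ A S]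
  [SMulCommClass ℂ A S]

omit [SMulCommClass ℂ A S] in
private theorem aux_schur [FiniteDimensional ℂ S] [IsSimpleModule A S]
    (e : Module.End A S) : ∃ c : ℂ, e = algebraMap ℂ (Module.End A S) c := by
  classical
  have : FiniteDimensional ℂ (Module.End A S) := by
    let f : Module.End A S →ₗ[ℂ] Module.End ℂ S :=
      { toFun := fun e => (LinearMap.restrictScalars ℂ e : S →ₗ[ℂ] S)
        map_add' := fun _ _ => rfl
        map_smul' := fun _ _ => rfl }
    exact FiniteDimensional.of_injective f (fun e₁ e₂ h =>
      LinearMap.ext fun x => DFunLike.congr_fun h x)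
  have : Nontrivial (Module.End A S) := by
    have := IsSimpleModule.nontrivial A S
    infer_instance
  obtain ⟨c, hc⟩ := spectrum.nonempty_of_isAlgClosed_of_finiteDimensional ℂ e
  rw [spectrum.mem_iff] at hc
  refine ⟨c, ?_⟩
  by_contra hne
  apply hc
  have h0 : algebraMap ℂ (Module.End A S) c - e ≠ 0 :=
    sub_ne_zero.mpr (fun h => hne h.symm)
  have hbij := LinearMap.bijective_of_ne_zero h0
  let g := LinearEquiv.ofBijective _ hbij
  exact ⟨⟨_, g.symm.toLinearMap,
    LinearMap.ext fun x => g.apply_symm_apply x,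
    LinearMap.ext fun x => g.symm_apply_apply x⟩, rfl⟩

private theorem aux_density [FiniteDimensional ℂ S] [IsSimpleModule A S]
    [IsSemisimpleRing A] (f : Module.End ℂ S) : ∃ a : A, ∀ x : S, a • x = f x := by
  classical
  set k := Module.finrank ℂ S with hk
  set b := Module.finBasis ℂ S with hb
  set v : Fin k → S := fun i => b i with hv
  set N : Submodule A (Fin k → S) := LinearMap.range (LinearMap.toSpanSingleton A _ v) with hN
  obtain ⟨N', hcompl⟩ := exists_isCompl N
  set p : (Fin k → S) →ₗ[A] (Fin k → S) :=
    N.subtype.comp (N.projectionOnto N' hcompl) with hp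
  have hpN : ∀ x ∈ N, p x = x := fun x hx => by
    simp [hp, Submodule.projectionOnto_apply_left hcompl ⟨x, hx⟩]
  have hrange : ∀ u, p u ∈ N := fun u => (N.projectionOnto N' hcompl u).2
  have hc : ∀ i j : Fin k, ∃ c : ℂ, ∀ x : S, p (Pi.single j x) i = c • x := by
    intro i j
    obtain ⟨c, hc⟩ := aux_schur A S ((LinearMap.proj i).comp (p.comp (LinearMap.single A _ j)))
    exact ⟨c, fun x => by
      have := DFunLike.congr_fun hc x
      simpa [Module.algebraMap_end_apply] using this⟩
  choose c hcspec using hc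
  have hpu : ∀ (u : Fin k → S) (i : Fin k), p u i = ∑ j, c i j • u j := by
    intro u i
    have : u = ∑ j, Pi.single j (u j) := by
      ext i'; simp [Finset.sum_apply, Pi.single_apply]
    conv_lhs => rw [this]
    rw [map_sum]
    simp only [Finset.sum_apply]
    exact Finset.sum_congr rfl fun j _ => hcspec i j (u j)
  have hvN : v ∈ N := ⟨1, one_smul _ _⟩
  have hpv : p v = v := hpN v hvN
  set w : Fin k → S := fun i => f (b i) with hw
  have hwN : w ∈ N := by
    have : w = p (fun i => f (v i)) := by
      ext i
      rw [hpu]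
      rw [show (∑ j, c i j • f (v j)) = f (∑ j, c i j • v j) by
        rw [map_sum]; exact Finset.sum_congr rfl fun j _ => (map_smul f _ _).symm]
      rw [← hpu, hpv]
    rw [this]
    exact hrange _
  obtain ⟨a, ha⟩ := hwN
  refine ⟨a, ?_⟩
  have key : ∀ i, a • b i = f (b i) := fun i => congrFun ha i
  let La : S →ₗ[ℂ] S :=
    { toFun := fun x => a • x
      map_add' := fun x y => smul_add a x y
      map_smul' := fun r x => (smul_comm r a x).symm }
  have : La = f := b.ext fun i => key i
  exact fun x => DFunLike.congr_fun this x

private theorem aux_semisimple [FiniteDimensional ℂ A] [Nontrivial A] [IsSimpleRing A] :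
    IsSemisimpleRing A := by
  classical
  have hart : IsArtinian A A := isArtinian_of_tower ℂ inferInstance
  have hatomic : IsAtomic (Submodule A A) := inferInstance
  obtain ⟨m, hm, -⟩ := (hatomic.eq_bot_or_exists_atom_le (⊤ : Submodule A A)).resolve_left
    bot_ne_top.symm
  set T : Submodule A A := sSup {m : Submodule A A | IsSimpleModule A m} with hT
  have hright : ∀ x ∈ T, ∀ a : A, x * a ∈ T := by
    intro x hx a
    let ra : A →ₗ[A] A :=
      { toFun := fun y => y * a
        map_add' := fun y z => add_mul y z a
        map_smul' := fun r y => by simp [smul_eq_mul, mul_assoc] }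
    have : T.map ra ≤ T := by
      rw [hT, sSup_eq_iSup', Submodule.map_iSup]
      apply iSup_le
      rintro ⟨p, hp⟩
      have hps : IsSimpleModule A p := hp
      set g : p →ₗ[A] A := ra.comp p.subtype with hg
      have : p.map ra = LinearMap.range g := by
        rw [LinearMap.range_comp, Submodule.range_subtype]
      rw [this]
      rcases g.injective_or_eq_zero with hinj | h0
      · exact le_iSup_of_le ⟨LinearMap.range g,
          IsSimpleModule.congr (LinearEquiv.ofInjective g hinj).symm⟩ le_rfl
      · rw [h0, LinearMap.range_zero]; exact bot_le
    exact this ⟨x, hx, rfl⟩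
  haveI : Ideal.IsTwoSided T := ⟨fun b hx => hright _ hx b⟩
  let I : TwoSidedIdeal A := Ideal.toTwoSided T
  have hI : I = ⊤ := by
    rcases IsSimpleRing.simple.eq_bot_or_eq_top I with h | h
    · exfalso
      have hm' : m ≤ T := le_sSup (isSimpleModule_iff_isAtom.mpr hm)
      obtain ⟨x, hxm, hx0⟩ := Submodule.exists_mem_ne_zero_of_ne_bot hm.1
      have : x ∈ I := Ideal.mem_toTwoSided.mpr (hm' hxm)
      rw [h, TwoSidedIdeal.mem_bot] at this
      exact hx0 this
    · exact h
  have hTtop : T = ⊤ := by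
    ext x
    simp only [Submodule.mem_top, iff_true]
    have : x ∈ I := hI ▸ TwoSidedIdeal.mem_top _
    exact Ideal.mem_toTwoSided.mp this
  exact IsSemisimpleModule.of_sSup_simples_eq_top hTtop

end Aux

/-- A nontrivial finite-dimensional associative unital ℂ-algebra is a
simple ring if and only if it is isomorphic, as a ℂ-algebra, to a matrix algebra
`Mat_n(ℂ)` for some `n ≥ 1`. -/
theorem simple_iff_matrix_algebra (A : Type*) [Ring A] [Algebra ℂ A]
    [FiniteDimensional ℂ A] [Nontrivial A] :
    IsSimpleRing A ↔
      ∃ n : ℕ, 1 ≤ n ∧ Nonempty (A ≃ₐ[ℂ] Matrix (Fin n) (Fin n) ℂ) := by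
  constructor
  · intro hsimple
    classical
    have hss : IsSemisimpleRing A := aux_semisimple A
    have hart : IsArtinian A A := isArtinian_of_tower ℂ inferInstance
    have hatomic : IsAtomic (Submodule A A) := inferInstance
    obtain ⟨m, hm, -⟩ := (hatomic.eq_bot_or_exists_atom_le (⊤ : Submodule A A)).resolve_left
      bot_ne_top.symm
    let S : Type _ := ↥m
    haveI : IsSimpleModule A S := isSimpleModule_iff_isAtom.mpr hm
    haveI : FiniteDimensional ℂ S :=
      inferInstanceAs (FiniteDimensional ℂ (m.restrictScalars ℂ))
    haveI : SMulCommClass ℂ A S := aux_smulComm A S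
    haveI hSnt : Nontrivial S := IsSimpleModule.nontrivial A S
    haveI : Nontrivial (Module.End ℂ S) := by
      obtain ⟨x, hx⟩ := exists_ne (0 : S)
      exact ⟨1, 0, fun h => hx (by simpa using DFunLike.congr_fun h x)⟩
    -- the representation map
    let φ : A →ₐ[ℂ] Module.End ℂ S :=
      { toFun := fun a =>
          { toFun := fun x => a • x
            map_add' := fun x y => smul_add a x y
            map_smul' := fun r x => (smul_comm r a x).symm }
        map_one' := LinearMap.ext fun x => one_smul A x
        map_mul' := fun a b => LinearMap.ext fun x => mul_smul a b x
        map_zero' := LinearMap.ext fun x => zero_smul A x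
        map_add' := fun a b => LinearMap.ext fun x => add_smul a b x
        commutes' := fun c => LinearMap.ext fun x => by
          simp [Module.algebraMap_end_apply, algebraMap_smul] }
    have hinj : Function.Injective φ := φ.toRingHom.injective
    have hsurj : Function.Surjective φ := by
      intro f
      obtain ⟨a, ha⟩ := aux_density A S f
      exact ⟨a, LinearMap.ext fun x => ha x⟩
    let e : A ≃ₐ[ℂ] Module.End ℂ S := AlgEquiv.ofBijective φ ⟨hinj, hsurj⟩
    refine ⟨Module.finrank ℂ S, Module.finrank_pos, ⟨e.trans (algEquivMatrix (Module.finBasis ℂ S))⟩⟩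
  · rintro ⟨n, hn, ⟨e⟩⟩
    have : Nonempty (Fin n) := ⟨⟨0, hn⟩⟩
    have hM : IsSimpleRing (Matrix (Fin n) (Fin n) ℂ) := inferInstance
    refine IsSimpleRing.of_eq_bot_or_eq_top fun I => ?_
    let J : TwoSidedIdeal (Matrix (Fin n) (Fin n) ℂ) :=
      I.comap (e.symm : Matrix (Fin n) (Fin n) ℂ →+* A)
    rcases hM.simple.eq_bot_or_eq_top J with h | h
    · left
      ext x
      simp only [TwoSidedIdeal.mem_bot]
      constructor
      · intro hx
        have : e x ∈ J := by simpa [J, TwoSidedIdeal.mem_comap] using hx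
        rw [h, TwoSidedIdeal.mem_bot] at this
        have := congrArg e.symm this
        simpa using this
      · rintro rfl; exact I.zero_mem
    · right
      ext x
      simp only [TwoSidedIdeal.mem_top, iff_true]
      have : e x ∈ J := h ▸ TwoSidedIdeal.mem_top _
      simpa [J, TwoSidedIdeal.mem_comap] using this
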